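/- Let F be the (d+p)×(d+p) block matrix with top-left block A, top-right columns c₀ = B z₀, c₁ = BG z₀, …, c_{p−1} = BG^{p−1} z₀ / (p−1)! (column k scaled by 1/k!), and lower block the shift structure with entries (k) on the subdiagonal of the polynomial block. For y₀ = (x₀, 1, 0, …, 0), and for k = p, …, p+d−1, F^k y₀ = (A^{k−p} γ, 0, …, 0) where γ = A^p x₀ + ∑_{j=0}^{p−1} A^{p−1−j} B G^j z₀. -/
import Mathlib


open scoped Matrix

/-- For the augmented matrix `F` (top row `(A, Bz₀, BGz₀, …, BG^{p−1}z₀/(p−1)!)`,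
shift structure below) and `y₀ = (x₀, 1, 0, …, 0)`, for `k = p, …, p+d−1` we have
`F^k y₀ = (A^{k−p} γ, 0, …, 0)` with `γ = A^p x₀ + ∑_{j<p} A^{p−1−j} B G^j z₀`. -/
theorem F_pow_mulVec_y0 (d p : ℕ) (hp : 0 < p)
    (A : Matrix (Fin d) (Fin d) ℝ) (B : Matrix (Fin d) (Fin p) ℝ)
    (G : Matrix (Fin p) (Fin p) ℝ) (hG : ∀ i j : Fin p, j ≤ i → G i j = 0)
    (x₀ : Fin d → ℝ) (z₀ : Fin p → ℝ)
    (F : Matrix (Fin d ⊕ Fin p) (Fin d ⊕ Fin p) ℝ)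
    (hF11 : ∀ i j : Fin d, F (Sum.inl i) (Sum.inl j) = A i j)
    (hF12 : ∀ (i : Fin d) (k : Fin p),
      F (Sum.inl i) (Sum.inr k) = (B *ᵥ ((G ^ (k : ℕ)) *ᵥ z₀)) i / (Nat.factorial k : ℝ))
    (hF21 : ∀ (k : Fin p) (j : Fin d), F (Sum.inr k) (Sum.inl j) = 0)
    (hF22 : ∀ k j : Fin p,
      F (Sum.inr k) (Sum.inr j) = if (j : ℕ) + 1 = (k : ℕ) then ((k : ℕ) : ℝ) else 0)
    (y₀ : Fin d ⊕ Fin p → ℝ)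
    (hy₀ : y₀ = Sum.elim x₀ (fun k => if k = ⟨0, hp⟩ then 1 else 0))
    (γ : Fin d → ℝ)
    (hγ : γ = (A ^ p) *ᵥ x₀ +
      ∑ j : Fin p, (A ^ (p - 1 - (j : ℕ))) *ᵥ (B *ᵥ ((G ^ (j : ℕ)) *ᵥ z₀))) :
    ∀ k : ℕ, p ≤ k → k < p + d →
      (F ^ k) *ᵥ y₀ = Sum.elim ((A ^ (k - p)) *ᵥ γ) (fun _ => 0) := by
  have mulVec_sum : ∀ (M : Matrix (Fin d) (Fin d) ℝ) (s : Finset ℕ) (f : ℕ → Fin d → ℝ),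
      M *ᵥ (∑ j ∈ s, f j) = ∑ j ∈ s, M *ᵥ f j := by
    intro M s f
    classical
    induction s using Finset.induction with
    | empty => simp
    | @insert a t ha ih => rw [Finset.sum_insert ha, Finset.sum_insert ha,
        Matrix.mulVec_add, ih]
  -- one-step action of F on a block vector
  have step : ∀ (u : Fin d → ℝ) (v : Fin p → ℝ),
      F *ᵥ (Sum.elim u v) = Sum.elim
        (A *ᵥ u + ∑ k : Fin p, (v k / (Nat.factorial k : ℝ)) •
            (B *ᵥ ((G ^ (k : ℕ)) *ᵥ z₀)))
        (fun k : Fin p => ∑ j : Fin p,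
            (if (j : ℕ) + 1 = (k : ℕ) then ((k : ℕ) : ℝ) else 0) * v j) := by
    intro u v
    funext i
    cases i with
    | inl i =>
        simp only [Matrix.mulVec, dotProduct, Fintype.sum_sum_type, Sum.elim_inl,
          Sum.elim_inr, hF11, hF12, Pi.add_apply, Finset.sum_apply, Pi.smul_apply,
          smul_eq_mul]
        congr 1
        apply Finset.sum_congr rfl
        intro k _
        ring
    | inr k =>
        simp only [Matrix.mulVec, dotProduct, Fintype.sum_sum_type, Sum.elim_inl,
          Sum.elim_inr, hF21, hF22, zero_mul, Finset.sum_const_zero, zero_add]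
  -- the first p steps
  have main : ∀ m : ℕ, m ≤ p →
      (F ^ m) *ᵥ y₀ = Sum.elim
        ((A ^ m) *ᵥ x₀ + ∑ j ∈ Finset.range m,
            (A ^ (m - 1 - j)) *ᵥ (B *ᵥ ((G ^ j) *ᵥ z₀)))
        (fun k : Fin p => if (k : ℕ) = m then ((Nat.factorial m : ℕ) : ℝ) else 0) := by
    intro m hm
    induction m with
    | zero =>
        funext i
        cases i with
        | inl i => simp [hy₀, Matrix.one_mulVec]
        | inr k => simp [hy₀, Matrix.one_mulVec, Fin.ext_iff]
    | succ m ih =>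
        have hmp : m < p := hm
        have ihm := ih (le_of_lt hmp)
        have hpow : F ^ (m + 1) = F * F ^ m := by rw [pow_succ']
        rw [hpow, ← Matrix.mulVec_mulVec, ihm, step]
        have hA : A *ᵥ ((A ^ m) *ᵥ x₀ + ∑ j ∈ Finset.range m,
            (A ^ (m - 1 - j)) *ᵥ (B *ᵥ ((G ^ j) *ᵥ z₀)))
            = (A ^ (m + 1)) *ᵥ x₀ + ∑ j ∈ Finset.range m,
              (A ^ (m - j)) *ᵥ (B *ᵥ ((G ^ j) *ᵥ z₀)) := by
          rw [Matrix.mulVec_add, Matrix.mulVec_mulVec, ← pow_succ', mulVec_sum]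
          congr 1
          apply Finset.sum_congr rfl
          intro j hj
          have hjm : j < m := Finset.mem_range.mp hj
          have h5 : m - 1 - j + 1 = m - j := by omega
          rw [Matrix.mulVec_mulVec, ← pow_succ', h5]
        have hfac : ((Nat.factorial m : ℕ) : ℝ) ≠ 0 := by
          exact_mod_cast (Nat.factorial_pos m).ne'
        have hS : (∑ k : Fin p,
            ((if (k : ℕ) = m then ((Nat.factorial m : ℕ) : ℝ) else 0) /
              (Nat.factorial k : ℝ)) • (B *ᵥ ((G ^ (k : ℕ)) *ᵥ z₀)))
            = B *ᵥ ((G ^ m) *ᵥ z₀) := by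
          rw [Finset.sum_eq_single (⟨m, hmp⟩ : Fin p)]
          · simp [div_self hfac]
          · intro k _ hk
            have : (k : ℕ) ≠ m := fun h => hk (Fin.ext h)
            simp [this]
          · intro h; exact absurd (Finset.mem_univ _) h
        have htop : A *ᵥ ((A ^ m) *ᵥ x₀ + ∑ j ∈ Finset.range m,
            (A ^ (m - 1 - j)) *ᵥ (B *ᵥ ((G ^ j) *ᵥ z₀))) +
            (∑ k : Fin p,
              ((if (k : ℕ) = m then ((Nat.factorial m : ℕ) : ℝ) else 0) /
                (Nat.factorial k : ℝ)) • (B *ᵥ ((G ^ (k : ℕ)) *ᵥ z₀)))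
            = (A ^ (m + 1)) *ᵥ x₀ + ∑ j ∈ Finset.range (m + 1),
              (A ^ (m + 1 - 1 - j)) *ᵥ (B *ᵥ ((G ^ j) *ᵥ z₀)) := by
          rw [hA, hS, Finset.sum_range_succ]
          have hlast : (A ^ (m + 1 - 1 - m)) *ᵥ (B *ᵥ ((G ^ m) *ᵥ z₀))
              = B *ᵥ ((G ^ m) *ᵥ z₀) := by
            have h0 : m + 1 - 1 - m = 0 := by omega
            rw [h0, pow_zero, Matrix.one_mulVec]
          rw [hlast]
          have hexp : ∀ j ∈ Finset.range m,
              (A ^ (m + 1 - 1 - j)) *ᵥ (B *ᵥ ((G ^ j) *ᵥ z₀))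
              = (A ^ (m - j)) *ᵥ (B *ᵥ ((G ^ j) *ᵥ z₀)) := by
            intro j hj
            have h4 : m + 1 - 1 - j = m - j := by omega
            rw [h4]
          rw [Finset.sum_congr rfl hexp]
          abel
        have hbot : (fun k : Fin p => ∑ j : Fin p,
            (if (j : ℕ) + 1 = (k : ℕ) then ((k : ℕ) : ℝ) else 0) *
              (if (j : ℕ) = m then ((Nat.factorial m : ℕ) : ℝ) else 0))
            = (fun k : Fin p =>
                if (k : ℕ) = m + 1 then ((Nat.factorial (m + 1) : ℕ) : ℝ) else 0) := by
          funext k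
          rw [Finset.sum_eq_single (⟨m, hmp⟩ : Fin p)]
          · simp only [Fin.val_mk, if_pos rfl]
            by_cases h : m + 1 = (k : ℕ)
            · rw [if_pos h, if_pos h.symm, ← h]
              push_cast [Nat.factorial_succ]
              ring
            · have h' : (k : ℕ) ≠ m + 1 := fun hh => h hh.symm
              rw [if_neg h, if_neg h', zero_mul]
          · intro j _ hj
            have : (j : ℕ) ≠ m := fun h => hj (Fin.ext h)
            simp [this]
          · intro h; exact absurd (Finset.mem_univ _) h
        rw [htop, hbot]
  -- at m = p
  have hp' : (F ^ p) *ᵥ y₀ = Sum.elim γ (fun _ => 0) := by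
    rw [main p le_rfl]
    have h1 : γ = (A ^ p) *ᵥ x₀ + ∑ j ∈ Finset.range p,
        (A ^ (p - 1 - j)) *ᵥ (B *ᵥ ((G ^ j) *ᵥ z₀)) := by
      rw [hγ]
      congr 1
      exact Fin.sum_univ_eq_sum_range (fun j => (A ^ (p - 1 - j)) *ᵥ (B *ᵥ ((G ^ j) *ᵥ z₀))) p
    funext i
    cases i with
    | inl i => simp [h1]
    | inr k =>
        have : (k : ℕ) ≠ p := Nat.ne_of_lt k.isLt
        simp [this]
  -- F^n on a vector with zero bottom block
  have tail : ∀ (n : ℕ) (u : Fin d → ℝ),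
      (F ^ n) *ᵥ (Sum.elim u (fun _ => 0)) = Sum.elim ((A ^ n) *ᵥ u) (fun _ => 0) := by
    intro n
    induction n with
    | zero => intro u; simp [Matrix.one_mulVec]
    | succ n ih =>
        intro u
        have hpow : F ^ (n + 1) = F ^ n * F := pow_succ F n
        rw [hpow, ← Matrix.mulVec_mulVec, step]
        simp only [zero_div, zero_smul, Finset.sum_const_zero, add_zero, mul_zero]
        rw [ih]
        have h3 : (A ^ (n + 1)) *ᵥ u = (A ^ n) *ᵥ (A *ᵥ u) := by
          rw [Matrix.mulVec_mulVec, ← pow_succ]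
        rw [h3]
  intro k hk _
  obtain ⟨n, rfl⟩ := Nat.exists_eq_add_of_le hk
  have h2 : p + n - p = n := by omega
  have hpow2 : F ^ (p + n) = F ^ n * F ^ p := by rw [← pow_add, Nat.add_comm]
  rw [h2, hpow2, ← Matrix.mulVec_mulVec, hp', tail]
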